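/- Let ν be a finite Borel measure on [0,∞), γ > 0, r > 0, and Φ a nonnegative measurable function on [0,r] with ν([0,x)) ≤ A·Φ(x) for all x ∈ [0,r] (A ≥ 0) and ∫₀^r s^{−2γ−1} Φ(s) ds ≤ M r^{−2γ} Φ(r). Then ∫_{[0,r)} s^{−2γ} dν(s) ≤ (1 + 2γM) A r^{−2γ} Φ(r). -/

import Mathlib

open MeasureTheory

/-- `ν` a finite Borel measure on `[0,∞)`, `γ > 0`, `r > 0`, `Φ ≥ 0`
measurable on `[0,r]` with `ν([0,x)) ≤ A Φ(x)` for `x ∈ [0,r]` and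
`∫₀^r s^{−2γ−1} Φ(s) ds ≤ M r^{−2γ} Φ(r)`. Then
`∫_{[0,r)} s^{−2γ} dν(s) ≤ (1 + 2γM) A r^{−2γ} Φ(r)`
(the integral taken in `[0,∞]`, with `0^{−2γ} = ∞`). -/
theorem statement14
    (ν : Measure ℝ) [IsFiniteMeasure ν] (hsupp : ν (Set.Iio 0) = 0)
    (Φ : ℝ → ℝ) (hΦmeas : Measurable Φ) (hΦ0 : ∀ s, 0 ≤ Φ s)
    (γ r A M : ℝ) (hγ : 0 < γ) (hr : 0 < r) (hA : 0 ≤ A) (hM : 0 < M)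
    (hbound : ∀ x ∈ Set.Icc 0 r, (ν (Set.Ico 0 x)).toReal ≤ A * Φ x)
    (hadm : ∫⁻ s in Set.Ioo 0 r, ENNReal.ofReal (s ^ (-(2 * γ) - 1) * Φ s) ≤
      ENNReal.ofReal (M * (r ^ (-(2 * γ)) * Φ r))) :
    ∫⁻ s in Set.Ico 0 r, (ENNReal.ofReal s) ^ (-(2 * γ)) ∂ν ≤
      ENNReal.ofReal ((1 + 2 * γ * M) * A * (r ^ (-(2 * γ)) * Φ r)) := by
  set c : ℝ := -(2 * γ) - 1 with hc
  set f : ℝ → ENNReal := fun u => ENNReal.ofReal (u ^ c) with hf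
  have hrpm : Measurable fun u : ℝ => u ^ c := by fun_prop
  have hfmeas : Measurable f := hrpm.ennreal_ofReal
  -- divergence of ∫₀^r u^c du
  have hdiv : ∫⁻ u in Set.Ioo 0 r, f u = ⊤ := by
    by_contra h
    have hnn : 0 ≤ᵐ[volume.restrict (Set.Ioo 0 r)] fun u => u ^ c := by
      filter_upwards [ae_restrict_mem measurableSet_Ioo] with u hu
      exact Real.rpow_nonneg hu.1.le c
    have hint := (lintegral_ofReal_ne_top_iff_integrable
      (hrpm.aestronglyMeasurable) hnn).mp h
    have hint' : IntegrableOn (fun u : ℝ => u ^ c) (Set.Ioo 0 r) := hint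
    rw [intervalIntegral.integrableOn_Ioo_rpow_iff hr] at hint'
    rw [hc] at hint'; linarith
  -- value of ∫ₛ^r u^c du for 0 < s < r
  have hIoo : ∀ s : ℝ, 0 < s → s < r →
      ∫⁻ u in Set.Ioo s r, f u
        = ENNReal.ofReal ((s ^ (-(2 * γ)) - r ^ (-(2 * γ))) / (2 * γ)) := by
    intro s hs hsr
    have hcont : ContinuousOn (fun u : ℝ => u ^ c) (Set.Icc s r) := by
      apply ContinuousOn.rpow_const continuousOn_id
      intro x hx
      exact Or.inl (ne_of_gt (lt_of_lt_of_le hs hx.1))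
    have hint : IntegrableOn (fun u : ℝ => u ^ c) (Set.Ioo s r) :=
      (hcont.integrableOn_compact isCompact_Icc).mono_set Set.Ioo_subset_Icc_self
    have hnn : 0 ≤ᵐ[volume.restrict (Set.Ioo s r)] fun u => u ^ c := by
      filter_upwards [ae_restrict_mem measurableSet_Ioo] with u hu
      exact Real.rpow_nonneg (hs.trans hu.1).le c
    rw [show ∫⁻ u in Set.Ioo s r, f u = ∫⁻ u in Set.Ioo s r, ENNReal.ofReal (u ^ c) from rfl,
      ← ofReal_integral_eq_lintegral_ofReal hint hnn]
    congr 1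
    have h0 : (0:ℝ) ∉ Set.uIcc s r := Set.notMem_uIcc_of_lt hs hr
    have hval : ∫ u in Set.Ioo s r, u ^ c
        = (r ^ (c + 1) - s ^ (c + 1)) / (c + 1) := by
      rw [← MeasureTheory.integral_Ioc_eq_integral_Ioo,
        ← intervalIntegral.integral_of_le hsr.le]
      exact integral_rpow (Or.inr ⟨by simp only [hc]; intro h; linarith, h0⟩)
    rw [hval]
    have hc1 : c + 1 = -(2 * γ) := by simp only [hc]; ring
    rw [hc1]
    have h2γ : (2:ℝ) * γ ≠ 0 := by positivity
    field_simp
    ring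
  -- the pointwise identity on [0, r)
  have key : ∀ s ∈ Set.Ico (0:ℝ) r,
      (ENNReal.ofReal s) ^ (-(2 * γ))
        = ENNReal.ofReal (r ^ (-(2 * γ)))
          + ENNReal.ofReal (2 * γ) * ∫⁻ u in Set.Ioo 0 r, (Set.Ioi s).indicator f u := by
    intro s hs
    have hind : ∫⁻ u in Set.Ioo 0 r, (Set.Ioi s).indicator f u
        = ∫⁻ u in Set.Ioo s r, f u := by
      have hset : Set.Ioi s ∩ Set.Ioo 0 r = Set.Ioo s r := by
        ext u
        simp only [Set.mem_inter_iff, Set.mem_Ioi, Set.mem_Ioo]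
        constructor
        · rintro ⟨h1, _, h3⟩; exact ⟨h1, h3⟩
        · rintro ⟨h1, h2⟩; exact ⟨h1, lt_of_le_of_lt hs.1 h1, h2⟩
      rw [lintegral_indicator measurableSet_Ioi, Measure.restrict_restrict measurableSet_Ioi,
        hset]
    rw [hind]
    rcases eq_or_lt_of_le hs.1 with h0 | h0
    · -- s = 0
      rw [← h0]
      rw [ENNReal.ofReal_zero, ENNReal.zero_rpow_of_neg (by linarith), hdiv,
        ENNReal.mul_top (ne_of_gt (ENNReal.ofReal_pos.mpr (by positivity)))]
      simp
    · -- 0 < s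
      rw [hIoo s h0 hs.2, ENNReal.ofReal_rpow_of_pos h0,
        ← ENNReal.ofReal_mul (by positivity),
        ← ENNReal.ofReal_add (Real.rpow_nonneg hr.le _)]
      · congr 1
        have h2γ : (2:ℝ) * γ ≠ 0 := by positivity
        field_simp
        ring
      · have hle : r ^ (-(2 * γ)) ≤ s ^ (-(2 * γ)) :=
          Real.rpow_le_rpow_of_nonpos h0 hs.2.le (by linarith)
        have : 0 ≤ (s ^ (-(2 * γ)) - r ^ (-(2 * γ))) / (2 * γ) := by
          apply div_nonneg (by linarith) (by positivity)
        positivity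
  -- rewrite the integral using the pointwise identity
  rw [setLIntegral_congr_fun measurableSet_Ico key]
  -- measurability of the inner integral
  have hFmeas : Measurable (Function.uncurry fun s u => (Set.Ioi s).indicator f u) := by
    have heq : (Function.uncurry fun s u => (Set.Ioi s).indicator f u)
        = Set.indicator {p : ℝ × ℝ | p.1 < p.2} (fun p => f p.2) := by
      ext ⟨s, u⟩
      by_cases h : s < u <;>
        simp [Function.uncurry, Set.indicator, h, Set.mem_Ioi]
    rw [heq]
    exact (hfmeas.comp measurable_snd).indicator (measurableSet_lt measurable_fst measurable_snd)
  have hgmeas : Measurable fun s => ∫⁻ u in Set.Ioo 0 r, (Set.Ioi s).indicator f u :=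
    Measurable.lintegral_prod_right hFmeas
  rw [lintegral_add_left measurable_const, setLIntegral_const,
    lintegral_const_mul _ hgmeas]
  -- Tonelli
  have hswap : ∫⁻ s in Set.Ico 0 r, (∫⁻ u in Set.Ioo 0 r, (Set.Ioi s).indicator f u) ∂ν
      = ∫⁻ u in Set.Ioo 0 r, f u * ν (Set.Ico 0 u) := by
    rw [lintegral_lintegral_swap (hFmeas.aemeasurable)]
    apply setLIntegral_congr_fun measurableSet_Ioo
    intro u hu
    have hind : ∀ s : ℝ, (Set.Ioi s).indicator f u = (Set.Iio u).indicator (fun _ => f u) s := by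
      intro s
      by_cases h : s < u <;> simp [Set.indicator, h, Set.mem_Ioi, Set.mem_Iio]
    simp_rw [hind]
    rw [lintegral_indicator measurableSet_Iio, setLIntegral_const,
      Measure.restrict_apply measurableSet_Iio]
    have hset2 : Set.Iio u ∩ Set.Ico 0 r = Set.Ico 0 u := by
      ext x
      simp only [Set.mem_inter_iff, Set.mem_Iio, Set.mem_Ico]
      constructor
      · rintro ⟨h1, h2, _⟩; exact ⟨h2, h1⟩
      · rintro ⟨h1, h2⟩; exact ⟨h2, h1, h2.trans hu.2⟩
    rw [hset2]
  rw [hswap]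
  -- bound the two terms
  have hb1 : ν (Set.Ico 0 r) ≤ ENNReal.ofReal (A * Φ r) := by
    rw [← ENNReal.ofReal_toReal (measure_ne_top ν (Set.Ico 0 r))]
    exact ENNReal.ofReal_le_ofReal (hbound r ⟨hr.le, le_refl r⟩)
  have hb2 : ∫⁻ u in Set.Ioo 0 r, f u * ν (Set.Ico 0 u)
      ≤ ENNReal.ofReal A * ENNReal.ofReal (M * (r ^ (-(2 * γ)) * Φ r)) := by
    have step : ∫⁻ u in Set.Ioo 0 r, f u * ν (Set.Ico 0 u)
        ≤ ∫⁻ u in Set.Ioo 0 r, ENNReal.ofReal A * ENNReal.ofReal (u ^ c * Φ u) := by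
      apply setLIntegral_mono (by fun_prop) _
      intro u hu
      have hν : ν (Set.Ico 0 u) ≤ ENNReal.ofReal (A * Φ u) := by
        rw [← ENNReal.ofReal_toReal (measure_ne_top ν (Set.Ico 0 u))]
        exact ENNReal.ofReal_le_ofReal (hbound u ⟨hu.1.le, hu.2.le⟩)
      calc f u * ν (Set.Ico 0 u) ≤ ENNReal.ofReal (u ^ c) * ENNReal.ofReal (A * Φ u) :=
            mul_le_mul_right hν _
        _ = ENNReal.ofReal A * ENNReal.ofReal (u ^ c * Φ u) := by
            rw [← ENNReal.ofReal_mul (Real.rpow_nonneg hu.1.le c),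
              ← ENNReal.ofReal_mul hA]
            congr 1
            ring
    calc ∫⁻ u in Set.Ioo 0 r, f u * ν (Set.Ico 0 u)
        ≤ ∫⁻ u in Set.Ioo 0 r, ENNReal.ofReal A * ENNReal.ofReal (u ^ c * Φ u) := step
      _ = ENNReal.ofReal A * ∫⁻ u in Set.Ioo 0 r, ENNReal.ofReal (u ^ c * Φ u) := by
          rw [lintegral_const_mul _ (by fun_prop)]
      _ ≤ ENNReal.ofReal A * ENNReal.ofReal (M * (r ^ (-(2 * γ)) * Φ r)) := by
          exact mul_le_mul_right hadm _
  calc ENNReal.ofReal (r ^ (-(2 * γ))) * ν (Set.Ico 0 r)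
        + ENNReal.ofReal (2 * γ) * ∫⁻ u in Set.Ioo 0 r, f u * ν (Set.Ico 0 u)
      ≤ ENNReal.ofReal (r ^ (-(2 * γ))) * ENNReal.ofReal (A * Φ r)
        + ENNReal.ofReal (2 * γ) *
          (ENNReal.ofReal A * ENNReal.ofReal (M * (r ^ (-(2 * γ)) * Φ r))) :=
      add_le_add (mul_le_mul_right hb1 _) (mul_le_mul_right hb2 _)
    _ = ENNReal.ofReal ((1 + 2 * γ * M) * A * (r ^ (-(2 * γ)) * Φ r)) := by
      have e1 : ENNReal.ofReal A * ENNReal.ofReal (M * (r ^ (-(2 * γ)) * Φ r))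
          = ENNReal.ofReal (A * (M * (r ^ (-(2 * γ)) * Φ r))) := (ENNReal.ofReal_mul hA).symm
      have e2 : ENNReal.ofReal (2 * γ) * ENNReal.ofReal (A * (M * (r ^ (-(2 * γ)) * Φ r)))
          = ENNReal.ofReal ((2 * γ) * (A * (M * (r ^ (-(2 * γ)) * Φ r)))) :=
        (ENNReal.ofReal_mul (by positivity)).symm
      have e3 : ENNReal.ofReal (r ^ (-(2 * γ))) * ENNReal.ofReal (A * Φ r)
          = ENNReal.ofReal (r ^ (-(2 * γ)) * (A * Φ r)) :=
        (ENNReal.ofReal_mul (Real.rpow_nonneg hr.le _)).symm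
      have hΦr := hΦ0 r
      have hrp : (0:ℝ) ≤ r ^ (-(2 * γ)) := Real.rpow_nonneg hr.le _
      have n1 : (0:ℝ) ≤ r ^ (-(2 * γ)) * (A * Φ r) := mul_nonneg hrp (mul_nonneg hA hΦr)
      have n2 : (0:ℝ) ≤ (2 * γ) * (A * (M * (r ^ (-(2 * γ)) * Φ r))) :=
        mul_nonneg (by positivity) (mul_nonneg hA (mul_nonneg hM.le (mul_nonneg hrp hΦr)))
      rw [e1, e2, e3, ← ENNReal.ofReal_add n1 n2]
      congr 1
      ring
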